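/- Let p = log_2 6. The function x ↦ x^(p−1) + 2x^((p−2)/2) − 2x^(p/2) is strictly concave on (0,1). -/

import Mathlib

open Real Set

theorem stmt_15 :
    StrictConcaveOn ℝ (Set.Ioo (0 : ℝ) 1)
      (fun x : ℝ => x ^ (Real.log 6 / Real.log 2 - 1)
        + 2 * x ^ ((Real.log 6 / Real.log 2 - 2) / 2)
        - 2 * x ^ ((Real.log 6 / Real.log 2) / 2)) := by
  set p : ℝ := Real.log 6 / Real.log 2 with hp
  have hlog2 : (0:ℝ) < Real.log 2 := Real.log_pos (by norm_num)
  have hp2 : 2 < p := by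
    rw [hp, lt_div_iff₀ hlog2]
    have h4 : (2:ℝ) * Real.log 2 = Real.log 4 := by
      rw [show (4:ℝ) = 2^(2:ℕ) by norm_num, Real.log_pow]; push_cast; ring
    rw [h4]; exact Real.log_lt_log (by norm_num) (by norm_num)
  have hp3 : p < 3 := by
    rw [hp, div_lt_iff₀ hlog2]
    have h8 : (3:ℝ) * Real.log 2 = Real.log 8 := by
      rw [show (8:ℝ) = 2^(3:ℕ) by norm_num, Real.log_pow]; push_cast; ring
    rw [h8]; exact Real.log_lt_log (by norm_num) (by norm_num)
  set f : ℝ → ℝ := fun x : ℝ => x ^ (p - 1) + 2 * x ^ ((p - 2) / 2) - 2 * x ^ (p / 2)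
    with hf
  set f1 : ℝ → ℝ := fun x : ℝ => (p-1) * x ^ (p-1-1)
      + 2 * ((p-2)/2 * x ^ ((p-2)/2 - 1)) - 2 * (p/2 * x ^ (p/2 - 1)) with hf1
  have hd1 : ∀ x : ℝ, x ≠ 0 → HasDerivAt f (f1 x) x := by
    intro x hx
    have h1 := Real.hasDerivAt_rpow_const (p := p - 1) (Or.inl hx)
    have h2 := Real.hasDerivAt_rpow_const (p := (p-2)/2) (Or.inl hx)
    have h3 := Real.hasDerivAt_rpow_const (p := p/2) (Or.inl hx)
    exact (h1.add (h2.const_mul 2)).sub (h3.const_mul 2)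
  have hd2 : ∀ x : ℝ, x ≠ 0 → HasDerivAt f1
      ((p-1) * ((p-1-1) * x ^ (p-1-1-1))
        + 2 * ((p-2)/2 * ((p-2)/2-1) * x ^ ((p-2)/2-1-1))
        - 2 * (p/2 * ((p/2-1) * x ^ (p/2-1-1)))) x := by
    intro x hx
    have h1 := (Real.hasDerivAt_rpow_const (p := p - 1 - 1) (Or.inl hx)).const_mul (p-1)
    have h2 := (Real.hasDerivAt_rpow_const (p := (p-2)/2 - 1) (Or.inl hx)).const_mul ((p-2)/2)
    have h3 := (Real.hasDerivAt_rpow_const (p := p/2 - 1) (Or.inl hx)).const_mul (p/2)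
    have := (h1.add (h2.const_mul 2)).sub (h3.const_mul 2)
    refine this.congr_deriv ?_
    ring
  apply strictConcaveOn_of_deriv2_neg (convex_Ioo 0 1)
  · -- continuity
    intro x hx
    have h1 : ContinuousAt (fun x : ℝ => x ^ (p-1)) x :=
      Real.continuousAt_rpow_const x _ (Or.inl (ne_of_gt hx.1))
    have h2 : ContinuousAt (fun x : ℝ => x ^ ((p-2)/2)) x :=
      Real.continuousAt_rpow_const x _ (Or.inl (ne_of_gt hx.1))
    have h3 : ContinuousAt (fun x : ℝ => x ^ (p/2)) x :=
      Real.continuousAt_rpow_const x _ (Or.inl (ne_of_gt hx.1))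
    exact ((h1.add (h2.const_mul 2)).sub (h3.const_mul 2)).continuousWithinAt
  · intro x hx
    rw [interior_Ioo] at hx
    obtain ⟨hx0, hx1⟩ := hx
    have hderiv_eq : deriv f =ᶠ[nhds x] f1 := by
      filter_upwards [eventually_ne_nhds (ne_of_gt hx0)] with y hy
      exact (hd1 y hy).deriv
    have key : deriv (deriv f) x = (p-1) * ((p-1-1) * x ^ (p-1-1-1))
        + 2 * ((p-2)/2 * ((p-2)/2-1) * x ^ ((p-2)/2-1-1))
        - 2 * (p/2 * ((p/2-1) * x ^ (p/2-1-1))) := by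
      rw [hderiv_eq.deriv_eq]
      exact (hd2 x (ne_of_gt hx0)).deriv
    show deriv^[2] f x < 0
    rw [show deriv^[2] f = deriv (deriv f) from rfl, key]
    -- rewrite exponents
    rw [show p-1-1-1 = (p-6)/2 + p/2 by ring,
        show (p-2)/2-1-1 = (p-6)/2 by ring,
        show p/2-1-1 = (p-6)/2 + 1 by ring,
        Real.rpow_add hx0, Real.rpow_add hx0, Real.rpow_one]
    set A : ℝ := x ^ ((p-6)/2) with hA
    set B : ℝ := x ^ (p/2) with hB
    have hApos : 0 < A := Real.rpow_pos_of_pos hx0 _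
    have hBx : B < x := by
      have := Real.rpow_lt_rpow_of_exponent_gt hx0 hx1 (by linarith : (1:ℝ) < p/2)
      simpa [Real.rpow_one] using this
    have hBpos : 0 < B := Real.rpow_pos_of_pos hx0 _
    have c1 : 0 < (p-1)*(p-2) := by nlinarith
    have h1 : (p-1)*(p-2)*(A*B) < (p-1)*(p-2)*(A*x) :=
      mul_lt_mul_of_pos_left (mul_lt_mul_of_pos_left hBx hApos) c1
    have c2 : 0 < (p-2)*(p/2-1) := by nlinarith
    have h2 : (p-2)*(p/2-1)*(A*x) < (p-2)*(p/2-1)*(A*1) :=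
      mul_lt_mul_of_pos_left (mul_lt_mul_of_pos_left hx1 hApos) c2
    have h3 : 0 < A*(p-2)*(3-p) :=
      mul_pos (mul_pos hApos (by linarith)) (by linarith)
    nlinarith [h1, h2, h3]
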